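/- arXiv:1310.0409 — 4 statements merged into one kernel-verified Lean document; each statement's English description precedes it below -/
import Mathlib

section
/- Let X be a topological space. Then w(X) = ona-w(X) · χ(X), where · is cardinal multiplication. -/
open Cardinal Set

universe u

/-- `V` is an open neighborhood assignment for `X`: each `V x` is an open set
containing `x`. -/
def IsONA {X : Type u} [TopologicalSpace X] (V : X → Set X) : Prop :=
  ∀ x, IsOpen (V x) ∧ x ∈ V x

/-- The weight of `X`: `ℵ₀` plus the least cardinality of a base for `X`. -/
noncomputable def weight (X : Type u) [TopologicalSpace X] : Cardinal.{u} :=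
  Cardinal.aleph0 + sInf {c : Cardinal.{u} |
    ∃ B : Set (Set X), TopologicalSpace.IsTopologicalBasis B ∧ #B = c}

/-- The character of `X`: `ℵ₀` plus the least cardinal `κ` such that every point has a
local base of cardinality at most `κ`. -/
noncomputable def character (X : Type u) [TopologicalSpace X] : Cardinal.{u} :=
  Cardinal.aleph0 + sInf {κ : Cardinal.{u} |
    ∀ x : X, ∃ B : Set (Set X),
      (∀ V ∈ B, IsOpen V ∧ x ∈ V) ∧
      (∀ U : Set X, IsOpen U → x ∈ U → ∃ V ∈ B, V ⊆ U) ∧ #B ≤ κ}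

/-- The ona-weight of `X`: `ℵ₀` plus the least cardinal `κ` such that every open
neighborhood assignment has an open neighborhood assignment refinement whose range has
cardinality at most `κ`. -/
noncomputable def onaWeight (X : Type u) [TopologicalSpace X] : Cardinal.{u} :=
  Cardinal.aleph0 + sInf {κ : Cardinal.{u} |
    ∀ V : X → Set X, IsONA V →
      ∃ W : X → Set X, IsONA W ∧ (∀ x, W x ⊆ V x) ∧ #(Set.range W) ≤ κ}

section Aux
variable (X : Type u) [TopologicalSpace X]

lemma aux_Sw_nonempty :
    {c : Cardinal.{u} |
      ∃ B : Set (Set X), TopologicalSpace.IsTopologicalBasis B ∧ #B = c}.Nonempty :=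
  ⟨#{s : Set X | IsOpen s}, {s | IsOpen s}, TopologicalSpace.isTopologicalBasis_opens, rfl⟩

lemma char_le_weight : character X ≤ weight X := by
  unfold character weight
  refine add_le_add_right (csInf_le_csInf (OrderBot.bddBelow _) (aux_Sw_nonempty X) ?_) _
  rintro c ⟨B, hB, rfl⟩ x
  refine ⟨{U ∈ B | x ∈ U}, ?_, ?_, Cardinal.mk_le_mk_of_subset (fun U hU => hU.1)⟩
  · rintro V ⟨hVB, hxV⟩; exact ⟨hB.isOpen hVB, hxV⟩
  · intro U hU hxU
    obtain ⟨v, hvB, hxv, hvU⟩ := hB.exists_subset_of_mem_open hxU hU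
    exact ⟨v, ⟨hvB, hxv⟩, hvU⟩

lemma onaW_le_weight : onaWeight X ≤ weight X := by
  unfold onaWeight weight
  refine add_le_add_right (csInf_le_csInf (OrderBot.bddBelow _) (aux_Sw_nonempty X) ?_) _
  rintro c ⟨B, hB, rfl⟩ V hV
  choose W hWB hxW hWV using fun x => hB.exists_subset_of_mem_open (hV x).2 (hV x).1
  exact ⟨W, fun x => ⟨hB.isOpen (hWB x), hxW x⟩, hWV,
    Cardinal.mk_le_mk_of_subset (range_subset_iff.mpr hWB)⟩

lemma weight_le_mul : weight X ≤ onaWeight X * character X := by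
  set Sw := {c : Cardinal.{u} |
    ∃ B : Set (Set X), TopologicalSpace.IsTopologicalBasis B ∧ #B = c} with hSwdef
  set Schar := {κ : Cardinal.{u} |
    ∀ x : X, ∃ B : Set (Set X),
      (∀ V ∈ B, IsOpen V ∧ x ∈ V) ∧
      (∀ U : Set X, IsOpen U → x ∈ U → ∃ V ∈ B, V ⊆ U) ∧ #B ≤ κ} with hSchardef
  set Sona := {κ : Cardinal.{u} |
    ∀ V : X → Set X, IsONA V →
      ∃ W : X → Set X, IsONA W ∧ (∀ x, W x ⊆ V x) ∧ #(Set.range W) ≤ κ} with hSonadef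
  have hκ : sInf Sona ∈ Sona := by
    apply csInf_mem
    exact ⟨#(Set X), fun V hV => ⟨V, hV, fun x => subset_rfl, Cardinal.mk_set_le _⟩⟩
  have hlam : sInf Schar ∈ Schar := by
    apply csInf_mem
    exact ⟨#(Set X), fun x => ⟨{U | IsOpen U ∧ x ∈ U}, fun V hV => hV,
      fun U hU hx => ⟨U, ⟨hU, hx⟩, subset_rfl⟩, Cardinal.mk_set_le _⟩⟩
  set κ := sInf Sona
  set lam := sInf Schar
  -- index type of cardinality ℵ₀ + lam
  set Λ : Type u := (Cardinal.aleph0 + lam).out with hΛdef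
  have hΛ : #Λ = Cardinal.aleph0 + lam := Cardinal.mk_out _
  have hΛne : Nonempty Λ := by
    rw [← Cardinal.mk_ne_zero_iff, hΛ]
    exact fun h => (Cardinal.aleph0_ne_zero) (by
      have := le_antisymm (h ▸ le_self_add) zero_le
      exact this)
  -- local bases
  choose Bx h1 h2 h3 using hlam
  have hne : ∀ x : X, Nonempty (Bx x) := by
    intro x
    obtain ⟨V, hVB, -⟩ := h2 x univ isOpen_univ (mem_univ x)
    exact ⟨⟨V, hVB⟩⟩
  have hle : ∀ x : X, #(Bx x) ≤ #Λ := by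
    intro x; rw [hΛ]; exact (h3 x).trans le_add_self
  have hemb : ∀ x : X, Nonempty (Bx x ↪ Λ) := fun x => (Cardinal.le_def _ _).mp (hle x)
  have e : ∀ x : X, Bx x ↪ Λ := fun x => (hemb x).some
  set g : X → Λ → Set X := fun x i => ((@Function.invFun _ _ (hne x) (e x)) i : Set X)
    with hgdef
  have hg_mem : ∀ x i, g x i ∈ Bx x := fun x i =>
    ((@Function.invFun _ _ (hne x) (e x)) i).2
  have hg_surj : ∀ x : X, ∀ V ∈ Bx x, ∃ i, g x i = V := by
    intro x V hV
    obtain ⟨i, hi⟩ := @Function.invFun_surjective _ _ (hne x) (e x) (e x).injective ⟨V, hV⟩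
    exact ⟨i, congrArg Subtype.val hi⟩
  have hONA : ∀ i : Λ, IsONA (fun x => g x i) := fun i x => h1 x _ (hg_mem x i)
  choose W hW1 hW2 hW3 using fun i => hκ (fun x => g x i) (hONA i)
  set 𝔅 : Set (Set X) := ⋃ i : Λ, Set.range (W i) with h𝔅def
  have hbasis : TopologicalSpace.IsTopologicalBasis 𝔅 := by
    apply TopologicalSpace.isTopologicalBasis_of_isOpen_of_nhds
    · rintro u hu
      simp only [h𝔅def, mem_iUnion, mem_range] at hu
      obtain ⟨i, x, rfl⟩ := hu
      exact (hW1 i x).1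
    · intro x U hxU hU
      obtain ⟨V, hVB, hVU⟩ := h2 x U hU hxU
      obtain ⟨i, hi⟩ := hg_surj x V hVB
      refine ⟨W i x, mem_iUnion.mpr ⟨i, mem_range_self x⟩, (hW1 i x).2, ?_⟩
      exact (hW2 i x).trans (hi ▸ hVU)
  have hcard : #𝔅 ≤ (Cardinal.aleph0 + lam) * κ := by
    calc #𝔅 ≤ #Λ * ⨆ i : Λ, #(Set.range (W i)) := Cardinal.mk_iUnion_le _
      _ ≤ #Λ * κ := mul_le_mul_right (ciSup_le' fun i => hW3 i) _
      _ = (Cardinal.aleph0 + lam) * κ := by rw [hΛ]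
  have hSwmem : #𝔅 ∈ Sw := ⟨𝔅, hbasis, rfl⟩
  have h1' : sInf Sw ≤ (Cardinal.aleph0 + lam) * κ := (csInf_le (OrderBot.bddBelow _) hSwmem).trans hcard
  -- final arithmetic
  unfold weight onaWeight character
  rw [← hSwdef, ← hSonadef, ← hSchardef]
  have hprod_inf : Cardinal.aleph0 ≤ (Cardinal.aleph0 + κ) * (Cardinal.aleph0 + lam) := by
    calc Cardinal.aleph0 ≤ Cardinal.aleph0 + κ := le_self_add
      _ = (Cardinal.aleph0 + κ) * 1 := (mul_one _).symm
      _ ≤ (Cardinal.aleph0 + κ) * (Cardinal.aleph0 + lam) :=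
        mul_le_mul_right (le_trans (by norm_num) (le_self_add : Cardinal.aleph0 ≤ _)) _
  refine Cardinal.add_le_of_le hprod_inf hprod_inf ?_
  calc sInf Sw ≤ (Cardinal.aleph0 + lam) * κ := h1'
    _ ≤ (Cardinal.aleph0 + lam) * (Cardinal.aleph0 + κ) := mul_le_mul_right le_add_self _
    _ = (Cardinal.aleph0 + κ) * (Cardinal.aleph0 + lam) := mul_comm _ _

end Aux

/-- For every topological space `X`, `w(X) = ona-w(X) · χ(X)`. -/
theorem stmt13 (X : Type u) [TopologicalSpace X] :
    weight X = onaWeight X * character X := by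
  have hw_inf : Cardinal.aleph0 ≤ weight X := le_self_add
  refine le_antisymm (weight_le_mul X) ?_
  calc onaWeight X * character X ≤ weight X * weight X :=
        mul_le_mul' (onaW_le_weight X) (char_le_weight X)
    _ = weight X := Cardinal.mul_eq_self hw_inf
end

section
/- Let X be a first countable topological space. Then w(X) = ona-w(X). -/
open Cardinal Set

universe u

/-- For every first countable topological space `X`, `w(X) = ona-w(X)`. -/
theorem stmt14 (X : Type u) [TopologicalSpace X] [FirstCountableTopology X] :
    weight X = onaWeight X := by
  set Sb : Set Cardinal.{u} := {c : Cardinal.{u} |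
    ∃ B : Set (Set X), TopologicalSpace.IsTopologicalBasis B ∧ #B = c} with hSbdef
  set S' : Set Cardinal.{u} := {κ : Cardinal.{u} |
    ∀ V : X → Set X, IsONA V →
      ∃ W : X → Set X, IsONA W ∧ (∀ x, W x ⊆ V x) ∧ #(Set.range W) ≤ κ} with hS'def
  have hSb : Sb.Nonempty :=
    ⟨_, {s | IsOpen s}, TopologicalSpace.isTopologicalBasis_opens, rfl⟩
  have hsub : Sb ⊆ S' := by
    rintro c ⟨B, hB, rfl⟩ V hV
    choose W hWB hxW hWV using fun x => hB.exists_subset_of_mem_open (hV x).2 (hV x).1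
    exact ⟨W, fun x => ⟨hB.isOpen (hWB x), hxW x⟩, hWV,
      mk_le_mk_of_subset (range_subset_iff.2 hWB)⟩
  have key : ∀ κ ∈ S', sInf Sb ≤ ℵ₀ * κ := by
    intro κ hκ
    have h1 : ∀ x : X, ∃ U : ℕ → Set X, (nhds x).HasAntitoneBasis U :=
      fun x => (nhds x).exists_antitone_basis
    choose U hU using h1
    have hW : ∀ n : ℕ, ∃ W : X → Set X, IsONA W ∧
        (∀ x, W x ⊆ interior (U x n)) ∧ #(range W) ≤ κ := fun n =>
      hκ (fun x => interior (U x n))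
        (fun x => ⟨isOpen_interior, mem_interior_iff_mem_nhds.2 ((hU x).mem n)⟩)
    choose W hWona hWsub hWcard using hW
    obtain ⟨B, hB, hBle⟩ : ∃ B : Set (Set X),
        TopologicalSpace.IsTopologicalBasis B ∧ #B ≤ ℵ₀ * κ := by
      refine ⟨⋃ n : ULift.{u} ℕ, range (W n.down), ?_, ?_⟩
      · refine TopologicalSpace.isTopologicalBasis_of_isOpen_of_nhds ?_ ?_
        · rintro s hs
          simp only [mem_iUnion, mem_range] at hs
          obtain ⟨n, x, rfl⟩ := hs
          exact (hWona n.down x).1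
        · intro x O hxO hO
          obtain ⟨n, -, hn⟩ := (hU x).toHasBasis.mem_iff.1 (hO.mem_nhds hxO)
          exact ⟨W n x, mem_iUnion.2 ⟨ULift.up n, mem_range_self x⟩, (hWona n x).2,
            (hWsub n x).trans (interior_subset.trans hn)⟩
      · refine mk_iUnion_le_sum_mk.trans ?_
        refine (Cardinal.sum_le_sum _ (fun _ : ULift.{u} ℕ => κ)
          fun n => hWcard n.down).trans ?_
        rw [Cardinal.sum_const', Cardinal.mk_uLift, mk_nat, Cardinal.lift_aleph0]
    have hmem : #B ∈ Sb := ⟨B, hB, rfl⟩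
    exact (csInf_le (OrderBot.bddBelow _) hmem).trans hBle
  refine le_antisymm ?_ (add_le_add_right (csInf_le_csInf (OrderBot.bddBelow _) hSb hsub) _)
  have hκ : sInf S' ∈ S' := csInf_mem (hSb.mono hsub)
  have hmul : ℵ₀ * sInf S' ≤ ℵ₀ + sInf S' :=
    (mul_le_max _ _).trans (max_le (max_le le_self_add le_add_self) le_self_add)
  calc weight X = ℵ₀ + sInf Sb := rfl
    _ ≤ ℵ₀ + ℵ₀ * sInf S' := add_le_add_right (key _ hκ) _
    _ ≤ ℵ₀ + (ℵ₀ + sInf S') := add_le_add_right hmul _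
    _ = onaWeight X := by rw [← add_assoc, Cardinal.aleph0_add_aleph0]; rfl
end

section
/- Let X be a topological space. Then d(X) ≤ ona-d(X) · χ(X), where · is cardinal multiplication. -/
open Cardinal Set

universe u

/-- The density of `X`: `ℵ₀` plus the least cardinality of a dense subset of `X`. -/
noncomputable def density (X : Type u) [TopologicalSpace X] : Cardinal.{u} :=
  Cardinal.aleph0 + sInf {c : Cardinal.{u} | ∃ D : Set X, Dense D ∧ #D = c}

/-- The ona-density of `X`: `ℵ₀` plus the least cardinal `κ` such that for every open
neighborhood assignment `(V_x)_{x∈X}` there is `D ⊆ X` with `|D| ≤ κ` meeting every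
`V_x`. -/
noncomputable def onaDensity (X : Type u) [TopologicalSpace X] : Cardinal.{u} :=
  Cardinal.aleph0 + sInf {κ : Cardinal.{u} |
    ∀ V : X → Set X, IsONA V →
      ∃ D : Set X, #D ≤ κ ∧ ∀ x, (D ∩ V x).Nonempty}

/-- For every topological space `X`, `d(X) ≤ ona-d(X) · χ(X)`. -/
theorem stmt15 (X : Type u) [TopologicalSpace X] :
    density X ≤ onaDensity X * character X := by
  classical
  set Sκ := {κ : Cardinal.{u} |
    ∀ V : X → Set X, IsONA V →
      ∃ D : Set X, #D ≤ κ ∧ ∀ x, (D ∩ V x).Nonempty} with hSκ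
  set SL := {κ : Cardinal.{u} |
    ∀ x : X, ∃ B : Set (Set X),
      (∀ V ∈ B, IsOpen V ∧ x ∈ V) ∧
      (∀ U : Set X, IsOpen U → x ∈ U → ∃ V ∈ B, V ⊆ U) ∧ #B ≤ κ} with hSL
  have hκmem : sInf Sκ ∈ Sκ := by
    apply csInf_mem
    refine ⟨#X, fun V hV => ⟨Set.univ, ?_, fun x => ⟨x, mem_univ x, (hV x).2⟩⟩⟩
    simp
  have hLmem : sInf SL ∈ SL := by
    apply csInf_mem
    refine ⟨#(Set X), fun x => ⟨{U | IsOpen U ∧ x ∈ U}, fun V hV => hV,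
      fun U hU hx => ⟨U, ⟨hU, hx⟩, subset_rfl⟩, Cardinal.mk_set_le _⟩⟩
  set κ := sInf Sκ
  set L := sInf SL
  -- choose bases
  choose B hBopen hBbase hBcard using hLmem
  -- index type
  set I := (character X).out with hI
  have hmkI : #I = character X := Cardinal.mk_out _
  have hBle : ∀ x : X, #(B x) ≤ #I := by
    intro x
    rw [hmkI]
    exact (hBcard x).trans (self_le_add_left _ _)
  have hBne : ∀ x : X, Nonempty (B x) := by
    intro x
    obtain ⟨V, hV, -⟩ := hBbase x Set.univ isOpen_univ (mem_univ x)
    exact ⟨⟨V, hV⟩⟩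
  have hsurj : ∀ x : X, ∃ s : I → B x, Function.Surjective s := by
    intro x
    haveI := hBne x
    obtain ⟨f⟩ := (hBle x)
    exact ⟨Function.invFun f, Function.invFun_surjective f.injective⟩
  choose s hs using hsurj
  -- ONA per index
  have hONA : ∀ i : I, IsONA (fun x => (s x i : Set X)) := by
    intro i x
    exact hBopen x _ (s x i).2
  choose D hDcard hDhit using fun i => hκmem _ (hONA i)
  set Dset := ⋃ i, D i with hDset
  have hDense : Dense Dset := by
    rw [dense_iff_inter_open]
    intro U hU ⟨x, hx⟩
    obtain ⟨V, hV, hVU⟩ := hBbase x U hU hx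
    obtain ⟨i, hi⟩ := hs x ⟨V, hV⟩
    obtain ⟨d, hdD, hdV⟩ := hDhit i x
    refine ⟨d, hVU ?_, mem_iUnion.2 ⟨i, hdD⟩⟩
    rw [hi] at hdV
    exact hdV
  have hcard : #Dset ≤ onaDensity X * character X := by
    calc #Dset ≤ #I * ⨆ i, #(D i) := Cardinal.mk_iUnion_le _
      _ ≤ #I * κ := by
          apply mul_le_mul_right
          exact ciSup_le' hDcard
      _ ≤ character X * onaDensity X := by
          rw [hmkI]
          exact mul_le_mul_right (self_le_add_left _ _) _
      _ = onaDensity X * character X := mul_comm _ _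
  have hP : Cardinal.aleph0 ≤ onaDensity X * character X := by
    calc Cardinal.aleph0 ≤ onaDensity X := self_le_add_right _ _
      _ ≤ onaDensity X * character X :=
          le_mul_of_one_le_right zero_le
            (le_trans (by exact_mod_cast Cardinal.one_le_aleph0) (self_le_add_right _ _))
  calc density X ≤ Cardinal.aleph0 + #Dset := by
        apply add_le_add_right
        exact csInf_le' ⟨Dset, hDense, rfl⟩
    _ ≤ onaDensity X * character X := Cardinal.add_le_of_le hP hP hcard
end

section
/- Let X be a first countable topological space. Then d(X) = ona-d(X). -/
open Cardinal Set

universe u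

/-- For every first countable topological space `X`, `d(X) = ona-d(X)`. -/
theorem stmt16 (X : Type u) [TopologicalSpace X] [FirstCountableTopology X] :
    density X = onaDensity X := by
  classical
  set S1 := {c : Cardinal.{u} | ∃ D : Set X, Dense D ∧ #D = c} with hS1
  set S2 := {κ : Cardinal.{u} |
    ∀ V : X → Set X, IsONA V →
      ∃ D : Set X, #D ≤ κ ∧ ∀ x, (D ∩ V x).Nonempty} with hS2
  have hS1ne : S1.Nonempty := ⟨#(Set.univ : Set X), Set.univ, dense_univ, rfl⟩
  have hsub : S1 ⊆ S2 := by
    rintro c ⟨D, hD, rfl⟩ V hV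
    refine ⟨D, le_rfl, fun x => ?_⟩
    have := hD.inter_open_nonempty (V x) (hV x).1 ⟨x, (hV x).2⟩
    rwa [Set.inter_comm] at this
  have hS2ne : S2.Nonempty := hS1ne.mono hsub
  refine le_antisymm ?_ (add_le_add_right (csInf_le_csInf (OrderBot.bddBelow _) hS1ne hsub) _)
  -- hard direction: density ≤ onaDensity
  set κ := sInf S2 with hκ
  have hκmem : κ ∈ S2 := csInf_mem hS2ne
  -- choose antitone bases
  have hbasis : ∀ x : X, ∃ u : ℕ → Set X, (nhds x).HasAntitoneBasis u := fun x =>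
    (nhds x).exists_antitone_basis
  choose u hu using hbasis
  -- for each n, the ONA x ↦ interior (u x n)
  have hona : ∀ n : ℕ, IsONA (fun x => interior (u x n)) := by
    intro n x
    exact ⟨isOpen_interior, mem_interior_iff_mem_nhds.2 ((hu x).1.mem_of_mem trivial)⟩
  have hDn : ∀ n : ℕ, ∃ D : Set X, #D ≤ κ ∧ ∀ x, (D ∩ interior (u x n)).Nonempty :=
    fun n => hκmem _ (hona n)
  choose Dn hDnle hDnmeet using hDn
  set D : Set X := ⋃ n : ULift.{u} ℕ, Dn n.down with hD
  have hDdense : Dense D := by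
    rw [dense_iff_inter_open]
    rintro U hU ⟨x, hx⟩
    obtain ⟨n, -, hn⟩ := (hu x).1.mem_iff.mp (hU.mem_nhds hx)
    obtain ⟨d, hd1, hd2⟩ := hDnmeet n x
    exact ⟨d, hn (interior_subset hd2), Set.mem_iUnion.2 ⟨ULift.up n, hd1⟩⟩
  have hDle : #D ≤ Cardinal.aleph0 * κ := by
    calc #D ≤ #(ULift.{u} ℕ) * ⨆ n : ULift.{u} ℕ, #(Dn n.down) :=
          Cardinal.mk_iUnion_le _
    _ ≤ Cardinal.aleph0 * κ := by
        rw [Cardinal.mk_uLift, Cardinal.mk_nat, Cardinal.lift_aleph0]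
        exact mul_le_mul_right (ciSup_le fun (n : ULift.{u} ℕ) => hDnle n.down) _
  have hmul : Cardinal.aleph0 + Cardinal.aleph0 * κ ≤ Cardinal.aleph0 + κ := by
    rcases le_total κ Cardinal.aleph0 with h | h
    · have : Cardinal.aleph0 * κ ≤ Cardinal.aleph0 := by
        calc Cardinal.aleph0 * κ ≤ Cardinal.aleph0 * Cardinal.aleph0 := mul_le_mul_right h _
        _ = Cardinal.aleph0 := by simp
      calc Cardinal.aleph0 + Cardinal.aleph0 * κ ≤ Cardinal.aleph0 + Cardinal.aleph0 :=
        add_le_add_right this _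
      _ = Cardinal.aleph0 := by simp
      _ ≤ Cardinal.aleph0 + κ := le_self_add
    · have : Cardinal.aleph0 * κ = κ := by
        rw [Cardinal.mul_eq_max (le_refl _) h]
        exact max_eq_right h
      rw [this]
  calc density X = Cardinal.aleph0 + sInf S1 := rfl
  _ ≤ Cardinal.aleph0 + #D :=
      add_le_add_right (csInf_le (OrderBot.bddBelow _) (show #D ∈ S1 from ⟨D, hDdense, rfl⟩)) _
  _ ≤ Cardinal.aleph0 + Cardinal.aleph0 * κ := add_le_add_right hDle _
  _ ≤ Cardinal.aleph0 + κ := hmul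
  _ = onaDensity X := rfl
end
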